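/- Let g : ℝ → ℝ satisfy g(0) = 0, g'(t) = (1 + 2 g(t)^2)^(-1/2) for t ≥ 0, extended oddly. Then g(t)^2 - g(t) g'(t) t ≥ 0 for all t ∈ ℝ. -/

import Mathlib

theorem stmt_4 (g : ℝ → ℝ) (hg0 : g 0 = 0)
    (hgd : ∀ t : ℝ, 0 ≤ t → HasDerivAt g (1 / Real.sqrt (1 + 2 * g t ^ 2)) t)
    (hodd : ∀ t : ℝ, g (-t) = - g t) :
    ∀ t : ℝ, 0 ≤ g t ^ 2 - g t * deriv g t * t := by
  -- g is monotone on [0,∞)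
  have hcont : ∀ s : ℝ, 0 ≤ s → ContinuousAt g s := fun s hs =>
    (hgd s hs).differentiableAt.continuousAt
  have hmono : MonotoneOn g (Set.Ici 0) := by
    apply monotoneOn_of_deriv_nonneg (convex_Ici 0)
      (fun s hs => (hcont s hs).continuousWithinAt)
    · intro s hs
      rw [interior_Ici] at hs
      exact (hgd s hs.le).differentiableAt.differentiableWithinAt
    · intro s hs
      rw [interior_Ici] at hs
      rw [(hgd s hs.le).deriv]
      positivity
  have hgnn : ∀ s : ℝ, 0 ≤ s → 0 ≤ g s := by
    intro s hs
    have := hmono (Set.mem_Ici.mpr le_rfl) (Set.mem_Ici.mpr hs) hs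
    rwa [hg0] at this
  -- key: for t ≥ 0, g t ^ 2 - g t * (1/√(1+2 g t ^2)) * t ≥ 0
  have key : ∀ t : ℝ, 0 ≤ t → 0 ≤ g t ^ 2 - g t * (1 / Real.sqrt (1 + 2 * g t ^ 2)) * t := by
    intro t ht
    set c := 1 / Real.sqrt (1 + 2 * g t ^ 2) with hc
    have hgt : 0 ≤ g t := hgnn t ht
    -- g s - s * c monotone on [0,t]
    have hmono2 : MonotoneOn (fun s => g s - s * c) (Set.Icc 0 t) := by
      apply monotoneOn_of_deriv_nonneg (convex_Icc 0 t)
      · exact fun s hs => ((hcont s hs.1).sub (continuousAt_id.mul continuousAt_const)).continuousWithinAt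
      · intro s hs
        rw [interior_Icc] at hs
        exact ((hgd s hs.1.le).sub ((hasDerivAt_id s).mul_const c)).differentiableAt.differentiableWithinAt
      · intro s hs
        rw [interior_Icc] at hs
        have hD : HasDerivAt (fun s => g s - s * c) (1 / Real.sqrt (1 + 2 * g s ^ 2) - c) s := by
          exact ((hgd s hs.1.le).sub ((hasDerivAt_id' s).mul_const c)).congr_deriv (by ring)
        rw [hD.deriv]
        have hgs : 0 ≤ g s := hgnn s hs.1.le
        have hle : g s ≤ g t := hmono (Set.mem_Ici.mpr hs.1.le) (Set.mem_Ici.mpr ht) hs.2.le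
        have hsq : g s ^ 2 ≤ g t ^ 2 := pow_le_pow_left₀ hgs hle 2
        have h1 : (0:ℝ) < Real.sqrt (1 + 2 * g s ^ 2) := Real.sqrt_pos.mpr (by positivity)
        have h2 : Real.sqrt (1 + 2 * g s ^ 2) ≤ Real.sqrt (1 + 2 * g t ^ 2) :=
          Real.sqrt_le_sqrt (by nlinarith)
        have : c ≤ 1 / Real.sqrt (1 + 2 * g s ^ 2) := by
          rw [hc]
          exact one_div_le_one_div_of_le h1 h2
        linarith
    have h0m : (0:ℝ) ∈ Set.Icc 0 t := ⟨le_rfl, ht⟩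
    have htm : t ∈ Set.Icc 0 t := ⟨ht, le_rfl⟩
    have := hmono2 h0m htm ht
    simp only [hg0, zero_mul, sub_zero] at this
    nlinarith
  intro t
  rcases le_or_gt 0 t with ht | ht
  · rw [(hgd t ht).deriv]
    exact key t ht
  · -- t < 0; derivative of g at t equals derivative at -t
    have hu : 0 ≤ -t := by linarith
    set c := 1 / Real.sqrt (1 + 2 * g (-t) ^ 2) with hc
    have hd : HasDerivAt g c t := by
      have h1 : HasDerivAt (fun x : ℝ => g (-x)) (c * (-1)) t :=
        (hgd (-t) hu).comp t (hasDerivAt_neg t)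
      have h2 : HasDerivAt (fun x : ℝ => -(g (-x))) (-(c * (-1))) t := h1.neg
      have heq : (fun x : ℝ => -(g (-x))) = g := by
        funext x; rw [hodd x]; ring
      rw [heq] at h2
      simpa using h2
    rw [hd.deriv]
    have hk := key (-t) hu
    have hgt : g t = - g (-t) := by rw [← hodd (-t), neg_neg]
    rw [hgt]
    nlinarith [hk]
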